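/- arXiv:1508.03310 — 11 statements merged into one kernel-verified Lean document; each statement's English description precedes it below -/
import Mathlib

section
/- A function F : X* → X* is associative if and only if it is preassociative and satisfies F ∘ F = F. -/
theorem stmt_2 {X : Type*} (F : List X → List X) :
    (∀ x y z : List X, F (x ++ y ++ z) = F (x ++ F y ++ z)) ↔
      ((∀ x y y' z : List X, F y = F y' → F (x ++ y ++ z) = F (x ++ y' ++ z)) ∧
        F ∘ F = F) := by
  constructor
  · intro hA
    constructor
    · intro x y y' z h
      have h1 := hA x y z
      have h2 := hA x y' z
      rw [h1, h, ← h2]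
    · funext y
      have := hA [] y []
      simpa using this.symm
  · rintro ⟨hP, hI⟩ x y z
    have hy : F (F y) = F y := congrFun hI y
    exact (hP x (F y) y z hy).symm
end

section
/- Let D be a nonempty subset of X* and F : X* → X* with F(D) ⊆ D. If F is in P_D and satisfies F(F(y)) = F(y) for all y ∈ D, then F is in A_D. -/
theorem stmt_4 {X : Type*} (D : Set (List X)) (hD : D.Nonempty) (F : List X → List X)
    (hFD : F '' D ⊆ D)
    (hP : ∀ x z : List X, ∀ y ∈ D, ∀ y' ∈ D,
      F y = F y' → F (x ++ y ++ z) = F (x ++ y' ++ z))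
    (hidem : ∀ y ∈ D, F (F y) = F y) :
    ∀ x z : List X, ∀ y ∈ D, F (x ++ y ++ z) = F (x ++ F y ++ z) := by
  intro x z y hy
  exact hP x z y hy (F y) (hFD ⟨y, hy, rfl⟩) (hidem y hy).symm
end

section
/- Let D be a nonempty subset of X* and F : X* → X*. Then F is in A'_D if and only if F is in P'_D and satisfies F(F(y)) = F(y) for all y ∈ D. -/
theorem stmt_5 {X : Type*} (D : Set (List X)) (hD : D.Nonempty) (F : List X → List X) :
    (∀ x z y : List X, F y ∈ F '' D → F (x ++ y ++ z) = F (x ++ F y ++ z)) ↔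
      ((∀ x z : List X, ∀ y ∈ D, ∀ y' : List X,
          F y = F y' → F (x ++ y ++ z) = F (x ++ y' ++ z)) ∧
        (∀ y ∈ D, F (F y) = F y)) := by
  constructor
  · intro hA
    constructor
    · intro x z y hy y' hyy'
      have h1 := hA x z y ⟨y, hy, rfl⟩
      have h2 := hA x z y' (by rw [← hyy']; exact ⟨y, hy, rfl⟩)
      rw [h1, h2, hyy']
    · intro y hy
      have := hA [] [] y ⟨y, hy, rfl⟩
      simpa using this.symm
  · rintro ⟨hP, hI⟩ x z y ⟨d, hd, hdy⟩
    have h1 : F (x ++ d ++ z) = F (x ++ y ++ z) := hP x z d hd y hdy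
    have h2 : F (x ++ d ++ z) = F (x ++ F y ++ z) := by
      apply hP x z d hd
      rw [← hdy]; exact (hI d hd).symm
    rw [← h1, h2]
end

section
/- If a function F : X* → Y is in P'_D for some nonempty D ⊆ X* and F has a D-determined range (i.e., ran(F) = F(D)), then F is preassociative: for all x, y, y', z ∈ X*, F(y) = F(y') implies F(xyz) = F(xy'z). -/
theorem stmt_6 {X Y : Type*} [Nonempty Y] (D : Set (List X)) (hD : D.Nonempty)
    (F : List X → Y)
    (hP : ∀ x z : List X, ∀ y ∈ D, ∀ y' : List X,
      F y = F y' → F (x ++ y ++ z) = F (x ++ y' ++ z))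
    (hran : Set.range F = F '' D) :
    ∀ x y y' z : List X, F y = F y' → F (x ++ y ++ z) = F (x ++ y' ++ z) := by
  intro x y y' z h
  have hy : F y ∈ F '' D := by rw [← hran]; exact ⟨y, rfl⟩
  obtain ⟨d, hd, hdy⟩ := hy
  have h1 := hP x z d hd y hdy
  have h2 := hP x z d hd y' (hdy.trans h)
  exact h1.symm.trans h2
end

section
/- (Assuming choice) A function F : X* → Y is in P_D if and only if there exist H ∈ A_D with H(D) ⊆ D and a one-to-one function f : ran(H) → Y such that F = f ∘ H. -/
theorem stmt_12 {X Y : Type*} [Nonempty Y] (D : Set (List X)) (hD : D.Nonempty)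
    (F : List X → Y) :
    (∀ x z : List X, ∀ y ∈ D, ∀ y' ∈ D,
        F y = F y' → F (x ++ y ++ z) = F (x ++ y' ++ z)) ↔
      (∃ (H : List X → List X) (f : List X → Y),
        (∀ x z : List X, ∀ y ∈ D, H (x ++ y ++ z) = H (x ++ H y ++ z)) ∧
        H '' D ⊆ D ∧ Set.InjOn f (Set.range H) ∧ F = f ∘ H) := by
  classical
  constructor
  · intro hP
    set g : Y → List X := fun c =>
      if h : ∃ y ∈ D, F y = c then h.choose
      else if h2 : ∃ w, F w = c then h2.choose else hD.some with hg
    have hgF : ∀ w, F (g (F w)) = F w := by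
      intro w
      by_cases h : ∃ y ∈ D, F y = F w
      · simp only [hg, dif_pos h]
        exact h.choose_spec.2
      · have h2 : ∃ v, F v = F w := ⟨w, rfl⟩
        simp only [hg, dif_neg h, dif_pos h2]
        exact h2.choose_spec
    have hgD : ∀ y ∈ D, g (F y) ∈ D := by
      intro y hy
      have h : ∃ y' ∈ D, F y' = F y := ⟨y, hy, rfl⟩
      simp only [hg, dif_pos h]
      exact h.choose_spec.1
    refine ⟨fun w => g (F w), F, ?_, ?_, ?_, ?_⟩
    · intro x z y hy
      have : F (x ++ y ++ z) = F (x ++ g (F y) ++ z) :=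
        hP x z y hy (g (F y)) (hgD y hy) (hgF y).symm
      simp only [this]
    · rintro _ ⟨y, hy, rfl⟩
      exact hgD y hy
    · rintro _ ⟨w1, rfl⟩ _ ⟨w2, rfl⟩ h
      simp only [hgF] at h
      simp only [h]
    · funext w
      exact (hgF w).symm
  · rintro ⟨H, f, hA, _, hinj, rfl⟩
    intro x z y hy y' hy' hFyy'
    have hH : H y = H y' := hinj ⟨y, rfl⟩ ⟨y', rfl⟩ hFyy'
    simp only [Function.comp_apply, hA x z y hy, hA x z y' hy', hH]
end

section
/- (Assuming choice) A function F : X* → Y is in P'_D if and only if there exist H ∈ A'_D with H ∘ H = H and a one-to-one function f : ran(H) → Y such that F = f ∘ H. -/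
theorem stmt_13 {X Y : Type*} [Nonempty Y] (D : Set (List X)) (hD : D.Nonempty)
    (F : List X → Y) :
    (∀ x z : List X, ∀ y ∈ D, ∀ y' : List X,
        F y = F y' → F (x ++ y ++ z) = F (x ++ y' ++ z)) ↔
      (∃ (H : List X → List X) (f : List X → Y),
        (∀ x z y : List X, H y ∈ H '' D → H (x ++ y ++ z) = H (x ++ H y ++ z)) ∧
        H ∘ H = H ∧ Set.InjOn f (Set.range H) ∧ F = f ∘ H) := by
  constructor
  · intro hP
    classical
    set g : Y → List X := fun c => if h : ∃ a, F a = c then Classical.choose h else []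
      with hg
    have hFg : ∀ x : List X, F (g (F x)) = F x := by
      intro x
      have h : ∃ a, F a = F x := ⟨x, rfl⟩
      simp only [hg, dif_pos h]
      exact Classical.choose_spec h
    set H : List X → List X := fun x => g (F x) with hH
    have hFH : ∀ x, F (H x) = F x := fun x => hFg x
    refine ⟨H, F, ?_, ?_, ?_, ?_⟩
    · intro x z y hy
      obtain ⟨d, hd, hdy⟩ := hy
      have hFdy : F d = F y := by
        have := congrArg F hdy
        rwa [hFH, hFH] at this
      have h1 : F (x ++ d ++ z) = F (x ++ y ++ z) := hP x z d hd y hFdy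
      have h2 : F (x ++ d ++ z) = F (x ++ H y ++ z) := by
        refine hP x z d hd (H y) ?_
        rw [hFH]; exact hFdy
      have h3 : F (x ++ y ++ z) = F (x ++ H y ++ z) := h1 ▸ h2
      show g (F (x ++ y ++ z)) = g (F (x ++ H y ++ z))
      rw [h3]
    · funext x
      show g (F (g (F x))) = g (F x)
      rw [hFg]
    · rintro a ⟨a', rfl⟩ b ⟨b', rfl⟩ hab
      show g (F a') = g (F b')
      rw [hFH, hFH] at hab
      rw [hab]
    · funext x
      exact (hFH x).symm
  · rintro ⟨H, f, hA, hHH, hinj, rfl⟩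
    intro x z y hy y' hyy'
    have hHyy' : H y = H y' := hinj ⟨y, rfl⟩ ⟨y', rfl⟩ hyy'
    have h1 : H (x ++ y ++ z) = H (x ++ H y ++ z) := hA x z y ⟨y, hy, rfl⟩
    have h2 : H (x ++ y' ++ z) = H (x ++ H y' ++ z) := by
      refine hA x z y' ⟨y, hy, hHyy'⟩
    show f (H (x ++ y ++ z)) = f (H (x ++ y' ++ z))
    rw [h1, h2, hHyy']
end

section
/- (Assuming choice) A function F : X* → Y is preassociative and has a D-determined range (ran(F) = F(D)) if and only if there exist an associative D-valued function H : X* → X* and a one-to-one function f : ran(H) → Y such that F = f ∘ H. -/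
theorem stmt_14 {X Y : Type*} [Nonempty Y] (D : Set (List X)) (hD : D.Nonempty)
    (F : List X → Y) :
    ((∀ x y y' z : List X, F y = F y' → F (x ++ y ++ z) = F (x ++ y' ++ z)) ∧
        Set.range F = F '' D) ↔
      (∃ (H : List X → List X) (f : List X → Y),
        (∀ x y z : List X, H (x ++ y ++ z) = H (x ++ H y ++ z)) ∧
        Set.range H ⊆ D ∧ Set.InjOn f (Set.range H) ∧ F = f ∘ H) := by
  constructor
  · rintro ⟨hpre, hran⟩
    classical
    set s : Y → List X := fun v => if h : ∃ d ∈ D, F d = v then h.choose else hD.some with hs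
    have hsD : ∀ v, s v ∈ D := by
      intro v; simp only [hs]
      split
      · next h => exact h.choose_spec.1
      · exact hD.some_mem
    have hsF : ∀ x, F (s (F x)) = F x := by
      intro x
      have hx : ∃ d ∈ D, F d = F x := by
        have : F x ∈ F '' D := hran ▸ Set.mem_range_self x
        obtain ⟨d, hd, hfd⟩ := this; exact ⟨d, hd, hfd⟩
      simp only [hs]; rw [dif_pos hx]; exact hx.choose_spec.2
    refine ⟨fun x => s (F x), F, ?_, ?_, ?_, ?_⟩
    · intro x y z
      show s (F (x ++ y ++ z)) = s (F (x ++ s (F y) ++ z))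
      rw [hpre x y (s (F y)) z (hsF y).symm]
    · rintro _ ⟨x, rfl⟩; exact hsD _
    · rintro _ ⟨a, rfl⟩ _ ⟨b, rfl⟩ h
      rw [hsF a, hsF b] at h
      simp only [h]
    · funext x; exact (hsF x).symm
  · rintro ⟨H, f, hassoc, hranD, hinj, rfl⟩
    have hHH : ∀ y, H (H y) = H y := by
      intro y; have := hassoc [] y []; simpa using this.symm
    constructor
    · intro x y y' z h
      have hH : H y = H y' := hinj ⟨y, rfl⟩ ⟨y', rfl⟩ h
      simp only [Function.comp_apply]
      rw [hassoc x y z, hassoc x y' z, hH]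
    · ext v
      constructor
      · rintro ⟨x, rfl⟩
        refine ⟨H x, hranD ⟨x, rfl⟩, ?_⟩
        simp [Function.comp_apply, hHH]
      · rintro ⟨d, _, rfl⟩; exact ⟨d, rfl⟩
end

section
/- (Assuming choice) For any function F : X* → Y and any subset D of X*, there exists a quasi-inverse g of F such that (g ∘ F)(D) ⊆ D; that is, the set Q_D(F) is nonempty. -/
theorem stmt_15 {X Y : Type*} [Nonempty X] (D : Set (List X)) (F : List X → Y) :
    ∃ g : Y → List X,
      (∀ y ∈ Set.range F, F (g y) = y) ∧
      g '' Set.range F = Set.range g ∧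
      (g ∘ F) '' D ⊆ D := by
  classical
  set g0 : Y → List X := fun y =>
    if h : y ∈ F '' D then h.choose
    else if h : y ∈ Set.range F then h.choose
    else [] with hg0
  set g : Y → List X := fun y =>
    if y ∈ Set.range F then g0 y else g0 (F []) with hg
  have hF0 : F [] ∈ Set.range F := ⟨[], rfl⟩
  have hinv : ∀ y ∈ Set.range F, F (g0 y) = y := by
    intro y hy
    simp only [hg0]
    by_cases h1 : y ∈ F '' D
    · rw [dif_pos h1]; exact h1.choose_spec.2
    · rw [dif_neg h1, dif_pos hy]; exact hy.choose_spec
  refine ⟨g, ?_, ?_, ?_⟩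
  · intro y hy; simp only [hg, if_pos hy]; exact hinv y hy
  · apply subset_antisymm
    · rintro _ ⟨y, hy, rfl⟩; exact ⟨y, rfl⟩
    · rintro _ ⟨y, rfl⟩
      by_cases hy : y ∈ Set.range F
      · exact ⟨y, hy, rfl⟩
      · refine ⟨F [], hF0, ?_⟩
        simp only [hg, if_pos hF0, if_neg hy]
  · rintro _ ⟨x, hx, rfl⟩
    have hFx : F x ∈ F '' D := ⟨x, hx, rfl⟩
    simp only [Function.comp_apply, hg, hg0]
    split_ifs with h1 h2
    · exact (Exists.choose_spec (Eq.mpr_prop (Eq.refl (F x ∈ F '' D)) hFx)).1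
    · exact absurd ⟨x, rfl⟩ h1
    · exact absurd ⟨x, rfl⟩ h1
end

section
/- If g is a quasi-inverse of f, then g restricted to ran(f) is one-to-one, and f is a quasi-inverse of g. -/
theorem stmt_16 {α β : Type*} (f : α → β) (g : β → α)
    (h1 : ∀ y ∈ Set.range f, f (g y) = y)
    (h2 : g '' Set.range f = Set.range g) :
    Set.InjOn g (Set.range f) ∧
      ((∀ x ∈ Set.range g, g (f x) = x) ∧ f '' Set.range g = Set.range f) := by
  refine ⟨fun y1 hy1 y2 hy2 h => by rw [← h1 y1 hy1, ← h1 y2 hy2, h], ?_, ?_⟩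
  · intro x hx
    rw [← h2] at hx
    obtain ⟨y, hy, rfl⟩ := hx
    rw [h1 y hy]
  · ext y
    constructor
    · rintro ⟨x, hx, rfl⟩
      rw [← h2] at hx
      obtain ⟨y', hy', rfl⟩ := hx
      rw [h1 y' hy']; exact hy'
    · intro hy
      exact ⟨g y, h2 ▸ ⟨y, hy, rfl⟩, h1 y hy⟩
end

section
/- Let m ≥ 0 and D_m = {x ∈ X* : |x| ≤ m}. Let F : X* → Y be in P'_{D_m}. Then ran(F restricted to X^{m+1}) ⊆ ⋃_{k=0}^m ran(F restricted to X^k) if and only if ran(F) = ⋃_{k=0}^m ran(F restricted to X^k). -/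
theorem stmt_17 {X Y : Type*} [Nonempty Y] (m : ℕ) (F : List X → Y)
    (hP : ∀ x z : List X, ∀ y : List X, y.length ≤ m → ∀ y' : List X,
      F y = F y' → F (x ++ y ++ z) = F (x ++ y' ++ z)) :
    (F '' {x : List X | x.length = m + 1} ⊆
        ⋃ k ≤ m, F '' {x : List X | x.length = k}) ↔
      Set.range F = ⋃ k ≤ m, F '' {x : List X | x.length = k} := by
  constructor
  · intro h
    apply Set.Subset.antisymm
    · rintro _ ⟨w, rfl⟩
      have key : ∀ n : ℕ, ∀ w : List X, w.length ≤ n →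
          F w ∈ ⋃ k ≤ m, F '' {x : List X | x.length = k} := by
        intro n
        induction n with
        | zero =>
          intro w hw
          simp only [Nat.le_zero, List.length_eq_zero_iff] at hw
          subst hw
          exact Set.mem_biUnion (Nat.zero_le m) ⟨[], rfl, rfl⟩
        | succ n ih =>
          intro w hw
          by_cases hm : w.length ≤ m
          · exact Set.mem_biUnion hm ⟨w, rfl, rfl⟩
          · push_neg at hm
            -- w.length ≥ m + 1
            set x := w.take (w.length - (m + 1)) with hx
            set y' := w.drop (w.length - (m + 1)) with hy'
            have hwxy : w = x ++ y' := (List.take_append_drop _ w).symm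
            have hy'len : y'.length = m + 1 := by
              rw [hy', List.length_drop]
              omega
            have hmem : F y' ∈ ⋃ k ≤ m, F '' {x : List X | x.length = k} :=
              h ⟨y', hy'len, rfl⟩
            simp only [Set.mem_iUnion, Set.mem_image, Set.mem_setOf_eq] at hmem
            obtain ⟨k, hk, v, hv, hFv⟩ := hmem
            have := hP x [] v (hv ▸ hk) y' hFv
            simp only [List.append_nil] at this
            rw [hwxy, ← this]
            apply ih
            have hxlen : x.length = w.length - (m + 1) := by
              rw [hx, List.length_take]; omega
            rw [List.length_append, hxlen, hv]
            omega
      exact key w.length w le_rfl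
    · intro y hy
      simp only [Set.mem_iUnion, Set.mem_image] at hy
      obtain ⟨k, hk, v, hv, hFv⟩ := hy
      exact ⟨v, hFv⟩
  · intro h
    rw [← h]
    rintro _ ⟨w, _, rfl⟩
    exact ⟨w, rfl⟩
end

section
/- Let D ⊆ X* be nonempty such that xDz ⊆ D for all x, z ∈ X*, and let F : D → X* be in A⁰_D with F(D) ⊆ D. Then the function G : X* → X* defined by G = F on D and G = identity on X* \ D belongs to A_D. -/
theorem stmt_18 {X : Type*} (D : Set (List X)) (hD : D.Nonempty)
    (hclosed : ∀ x z : List X, ∀ y ∈ D, x ++ y ++ z ∈ D)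
    (F : List X → List X) (hFD : F '' D ⊆ D)
    (hA0 : ∀ x z y : List X, x ++ y ++ z ∈ D → y ∈ D → x ++ F y ++ z ∈ D →
      F (x ++ y ++ z) = F (x ++ F y ++ z))
    (G : List X → List X) (hG1 : ∀ x ∈ D, G x = F x) (hG2 : ∀ x ∉ D, G x = x) :
    ∀ x z : List X, ∀ y ∈ D, G (x ++ y ++ z) = G (x ++ G y ++ z) := by
  intro x z y hy
  have hFy : F y ∈ D := hFD ⟨y, hy, rfl⟩
  have h1 : x ++ y ++ z ∈ D := hclosed x z y hy
  have h2 : x ++ F y ++ z ∈ D := hclosed x z (F y) hFy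
  rw [hG1 y hy, hG1 _ h1, hG1 _ h2, hA0 x z y h1 hy h2]
end
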